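/- arXiv:2605.00603 — 2 statements merged into one kernel-verified Lean document; each statement's English description precedes it below -/
import Mathlib

section
/- Let n be a natural number and let α, β, γ be nonnegative reals with γ = log₂((1+√5)/2). If either (i) α ≤ n/2 and β ≤ (n-α)/2, or (ii) β ≤ n/2 and α ≤ (n-β)/2, then α^γ + β^γ ≤ n^γ. -/
open Real

private lemma phi_facts :
    let φ := (1 + Real.sqrt 5) / 2
    1 < φ ∧ φ < 2 ∧ φ ^ 2 = φ + 1 := by
  have h5 : Real.sqrt 5 ^ 2 = 5 := Real.sq_sqrt (by norm_num)
  have h1 : 1 < Real.sqrt 5 := by nlinarith [Real.sqrt_nonneg 5]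
  have h3 : Real.sqrt 5 < 3 := by nlinarith [Real.sqrt_nonneg 5]
  refine ⟨by nlinarith, by nlinarith, by nlinarith⟩

private lemma gamma_facts {γ : ℝ} (hγ : γ = Real.logb 2 ((1 + Real.sqrt 5) / 2)) :
    0 < γ ∧ γ < 1 ∧ (2 : ℝ) ^ γ = (1 + Real.sqrt 5) / 2 := by
  obtain ⟨h1, h2, -⟩ := phi_facts
  refine ⟨?_, ?_, ?_⟩
  · rw [hγ]
    exact Real.logb_pos (by norm_num) h1
  · have h2γ : (2:ℝ) ^ γ = (1 + Real.sqrt 5) / 2 := by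
      rw [hγ]; exact Real.rpow_logb (by norm_num) (by norm_num) (by linarith)
    have : (2:ℝ) ^ γ < (2:ℝ) ^ (1:ℝ) := by
      rw [h2γ, Real.rpow_one]; exact h2
    exact (Real.rpow_lt_rpow_left_iff (by norm_num)).mp this
  · rw [hγ]
    exact Real.rpow_logb (by norm_num) (by norm_num) (by linarith)

private lemma key_half (γ : ℝ) (hγ : γ = Real.logb 2 ((1 + Real.sqrt 5) / 2)) :
    ((1:ℝ)/2) ^ γ + ((1:ℝ)/4) ^ γ = 1 := by
  obtain ⟨-, -, hsq⟩ := phi_facts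
  obtain ⟨hg0, hg1, h2γ⟩ := gamma_facts hγ
  set φ := (1 + Real.sqrt 5) / 2 with hφ
  have hφpos : 0 < φ := by
    have := phi_facts.1; rw [hφ]; linarith [phi_facts.1]
  have hhalf : ((1:ℝ)/2) ^ γ = φ⁻¹ := by
    rw [show ((1:ℝ)/2) = 2⁻¹ by norm_num, Real.inv_rpow (by norm_num), h2γ]
  have hquarter : ((1:ℝ)/4) ^ γ = (φ⁻¹) ^ 2 := by
    rw [show ((1:ℝ)/4) = (2⁻¹ : ℝ) ^ (2:ℕ) by norm_num, ← Real.rpow_natCast (2⁻¹ : ℝ) 2,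
      ← Real.rpow_mul (by norm_num), mul_comm, Real.rpow_mul (by norm_num),
      Real.inv_rpow (by norm_num), h2γ, Real.rpow_natCast]
  rw [hhalf, hquarter]
  field_simp
  nlinarith [hsq]

private lemma key_case {N α β γ : ℝ} (hN : 0 < N) (hα : 0 ≤ α) (hβ : 0 ≤ β)
    (hγ : γ = Real.logb 2 ((1 + Real.sqrt 5) / 2))
    (h1 : α ≤ N / 2) (h2 : β ≤ (N - α) / 2) :
    α ^ γ + β ^ γ ≤ N ^ γ := by
  obtain ⟨hg0, hg1, -⟩ := gamma_facts hγ
  have hA : (0:ℝ) < (N/2) ^ γ := Real.rpow_pos_of_pos (by linarith) γ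
  have hB : (0:ℝ) < (N/4) ^ γ := Real.rpow_pos_of_pos (by linarith) γ
  -- N^γ = (N/2)^γ + (N/4)^γ
  have hsum : (N/2) ^ γ + (N/4) ^ γ = N ^ γ := by
    have e1 : (N/2) ^ γ = N ^ γ * ((1:ℝ)/2) ^ γ := by
      rw [← Real.mul_rpow hN.le (by norm_num)]; ring_nf
    have e2 : (N/4) ^ γ = N ^ γ * ((1:ℝ)/4) ^ γ := by
      rw [← Real.mul_rpow hN.le (by norm_num)]; ring_nf
    rw [e1, e2, ← mul_add, key_half γ hγ, mul_one]
  have hAB : (N/4) ^ γ ≤ (N/2) ^ γ :=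
    Real.rpow_le_rpow (by linarith) (by linarith) hg0.le
  -- Bernoulli bounds
  have bern : ∀ t : ℝ, 0 ≤ t → t ^ γ ≤ 1 + γ * (t - 1) := by
    intro t ht
    have := rpow_one_add_le_one_add_mul_self (s := t - 1) (by linarith) hg0.le hg1.le
    simpa using this
  have hαb : α ^ γ ≤ (N/2) ^ γ * (1 + γ * (2*α/N - 1)) := by
    have hx : α = (N/2) * (2*α/N) := by field_simp
    calc α ^ γ = (N/2) ^ γ * (2*α/N) ^ γ := by
          rw [← Real.mul_rpow (by linarith) (by positivity), ← hx]
      _ ≤ (N/2) ^ γ * (1 + γ * (2*α/N - 1)) := by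
          apply mul_le_mul_of_nonneg_left (bern _ (by positivity)) hA.le
  have hβb : β ^ γ ≤ (N/4) ^ γ * (1 + γ * (4*β/N - 1)) := by
    have hx : β = (N/4) * (4*β/N) := by field_simp
    calc β ^ γ = (N/4) ^ γ * (4*β/N) ^ γ := by
          rw [← Real.mul_rpow (by linarith) (by positivity), ← hx]
      _ ≤ (N/4) ^ γ * (1 + γ * (4*β/N - 1)) := by
          apply mul_le_mul_of_nonneg_left (bern _ (by positivity)) hB.le
  -- combine
  have h2' : 4*β/N - 1 ≤ 1 - 2*α/N := by
    rw [div_sub_one hN.ne', sub_div' hN.ne', div_le_div_iff₀ hN hN]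
    nlinarith
  have h1' : 2*α/N - 1 ≤ 0 := by
    rw [div_sub_one hN.ne', div_nonpos_iff]
    right; constructor <;> linarith
  have hint1 : (N/4)^γ * (4*β/N-1) ≤ (N/4)^γ * (1-2*α/N) :=
    mul_le_mul_of_nonneg_left h2' hB.le
  have hbr : (N/2)^γ * (2*α/N-1) + (N/4)^γ * (4*β/N-1) ≤ 0 := by
    nlinarith [mul_nonneg (by linarith : (0:ℝ) ≤ 1 - 2*α/N) (by linarith : (0:ℝ) ≤ (N/2)^γ - (N/4)^γ)]
  have hγbr : γ * ((N/2)^γ * (2*α/N-1) + (N/4)^γ * (4*β/N-1)) ≤ 0 :=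
    mul_nonpos_of_nonneg_of_nonpos hg0.le hbr
  nlinarith [hγbr, hαb, hβb]

theorem stmt_2 (n : ℕ) (α β γ : ℝ) (hα : 0 ≤ α) (hβ : 0 ≤ β)
    (hγ : γ = Real.logb 2 ((1 + Real.sqrt 5) / 2))
    (h : (α ≤ (n : ℝ) / 2 ∧ β ≤ ((n : ℝ) - α) / 2) ∨
         (β ≤ (n : ℝ) / 2 ∧ α ≤ ((n : ℝ) - β) / 2)) :
    α ^ γ + β ^ γ ≤ (n : ℝ) ^ γ := by
  obtain ⟨hg0, -, -⟩ := gamma_facts hγ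
  rcases Nat.eq_zero_or_pos n with hn | hn
  · subst hn
    have hα0 : α = 0 := by
      rcases h with ⟨h1, h2⟩ | ⟨h1, h2⟩ <;> simp at h1 h2 <;> linarith
    have hβ0 : β = 0 := by
      rcases h with ⟨h1, h2⟩ | ⟨h1, h2⟩ <;> simp at h1 h2 <;> linarith
    simp [hα0, hβ0, Real.zero_rpow hg0.ne']
  · have hN : (0:ℝ) < n := by exact_mod_cast hn
    rcases h with ⟨h1, h2⟩ | ⟨h1, h2⟩
    · exact key_case hN hα hβ hγ h1 h2
    · rw [add_comm]
      exact key_case hN hβ hα hγ h1 h2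
end

section
/- In any upward-planar layered drawing of the complete bipartite DAG K_{2,2s} with all edges directed from the two vertices u, v of degree 2s toward the 2s vertices of degree 2, some edge has span at least s. -/

lemma memSeg (px py qx qy t : ℝ) (h : py < qy) (ht1 : py ≤ t) (ht2 : t ≤ qy) :
    ((1 - (t - py) / (qy - py)) * px + (t - py) / (qy - py) * qx, t)
      ∈ segment ℝ (px, py) (qx, qy) := by
  have hd : 0 < qy - py := by linarith
  refine ⟨1 - (t - py) / (qy - py), (t - py) / (qy - py), ?_, div_nonneg (by linarith) hd.le, by ring, ?_⟩
  · have : (t - py) / (qy - py) ≤ 1 := by rw [div_le_one hd]; linarith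
    linarith
  · have h2 : (1 - (t - py) / (qy - py)) * py + (t - py) / (qy - py) * qy = t := by
      field_simp; ring
    simp only [Prod.smul_mk, Prod.mk_add_mk, Prod.mk.injEq, smul_eq_mul]
    exact ⟨trivial, h2⟩

lemma ivtSeg (ux uy ax vx vy bx L : ℝ) (huv : vy ≤ uy) (huL : uy < L)
    (hsign : ((1 - (uy - vy) / (L - vy)) * vx + (uy - vy) / (L - vy) * bx - ux) * (bx - ax) ≤ 0)
    (hne : ax ≠ bx) :
    ∃ p : ℝ × ℝ, p ∈ segment ℝ (ux, uy) (ax, L) ∧ p ∈ segment ℝ (vx, vy) (bx, L) := by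
  have hvL : vy < L := lt_of_le_of_lt huv huL
  set g : ℝ → ℝ := fun t => (1 - (t - uy) / (L - uy)) * ux + (t - uy) / (L - uy) * ax with hg
  set f : ℝ → ℝ := fun t => (1 - (t - vy) / (L - vy)) * vx + (t - vy) / (L - vy) * bx with hf
  have hcont : ContinuousOn (fun t => f t - g t) (Set.Icc uy L) := by
    apply Continuous.continuousOn
    fun_prop
  have e1 : (L - vy) / (L - vy) = 1 := div_self (by linarith)
  have e2 : (L - uy) / (L - uy) = 1 := div_self (by linarith)
  have hfgL : f L - g L = bx - ax := by
    simp only [hf, hg]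
    rw [e1, e2]; ring
  have hfguy : f uy - g uy = (1 - (uy - vy) / (L - vy)) * vx + (uy - vy) / (L - vy) * bx - ux := by
    simp only [hf, hg]
    field_simp
    ring
  have hQ : (f uy - g uy) * (bx - ax) ≤ 0 := by rw [hfguy]; exact hsign
  have key : ∃ t ∈ Set.Icc uy L, f t - g t = 0 := by
    rcases lt_or_gt_of_ne hne with hab | hab
    · have h1 : f uy - g uy ≤ 0 := by
        by_contra hc; push_neg at hc
        nlinarith [mul_pos hc (sub_pos.mpr hab)]
      have h2 : 0 ≤ f L - g L := by rw [hfgL]; linarith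
      have := intermediate_value_Icc huL.le hcont
      have h0 : (0:ℝ) ∈ Set.Icc (f uy - g uy) (f L - g L) := ⟨h1, h2⟩
      obtain ⟨t, ht, hft⟩ := this h0
      exact ⟨t, ht, hft⟩
    · have h1 : 0 ≤ f uy - g uy := by
        by_contra hc; push_neg at hc
        nlinarith [mul_pos (show (0:ℝ) < g uy - f uy by linarith) (show (0:ℝ) < ax - bx by linarith)]
      have h2 : f L - g L ≤ 0 := by rw [hfgL]; linarith
      have := intermediate_value_Icc' huL.le hcont
      have h0 : (0:ℝ) ∈ Set.Icc (f L - g L) (f uy - g uy) := ⟨h2, h1⟩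
      obtain ⟨t, ht, hft⟩ := this h0
      exact ⟨t, ht, hft⟩
  obtain ⟨t, ⟨ht1, ht2⟩, hft⟩ := key
  have heq : f t = g t := by linarith [hft]
  refine ⟨(g t, t), memSeg ux uy ax L t huL ht1 ht2, ?_⟩
  rw [← heq]
  exact memSeg vx vy bx L t hvL (le_trans huv ht1) ht2

lemma coreD (ux uy vx vy ax bx cx L : ℝ) (huL : uy < L) (hvL : vy < L)
    (d1 : ∀ p : ℝ × ℝ, p ∈ segment ℝ (ux, uy) (ax, L) → p ∈ segment ℝ (vx, vy) (bx, L) → False)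
    (d2 : ∀ p : ℝ × ℝ, p ∈ segment ℝ (ux, uy) (cx, L) → p ∈ segment ℝ (vx, vy) (bx, L) → False)
    (d3 : ∀ p : ℝ × ℝ, p ∈ segment ℝ (vx, vy) (ax, L) → p ∈ segment ℝ (ux, uy) (bx, L) → False)
    (d4 : ∀ p : ℝ × ℝ, p ∈ segment ℝ (vx, vy) (cx, L) → p ∈ segment ℝ (ux, uy) (bx, L) → False)
    (hab : ax < bx) (hbc : bx < cx) : False := by
  rcases le_total vy uy with h | h
  · set q := (1 - (uy - vy) / (L - vy)) * vx + (uy - vy) / (L - vy) * bx with hq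
    rcases le_total q ux with hqx | hqx
    · obtain ⟨p, p1, p2⟩ := ivtSeg ux uy ax vx vy bx L h huL (by rw [← hq]; nlinarith) hab.ne
      exact d1 p p1 p2
    · obtain ⟨p, p1, p2⟩ := ivtSeg ux uy cx vx vy bx L h huL (by rw [← hq]; nlinarith) hbc.ne'
      exact d2 p p1 p2
  · set q := (1 - (vy - uy) / (L - uy)) * ux + (vy - uy) / (L - uy) * bx with hq
    rcases le_total q vx with hqx | hqx
    · obtain ⟨p, p1, p2⟩ := ivtSeg vx vy ax ux uy bx L h hvL (by rw [← hq]; nlinarith) hab.ne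
      exact d3 p p1 p2
    · obtain ⟨p, p1, p2⟩ := ivtSeg vx vy cx ux uy bx L h hvL (by rw [← hq]; nlinarith) hbc.ne'
      exact d4 p p1 p2

/-- In any upward-planar layered (straight-line) drawing of the complete bipartite DAG
`K_{2,2s}` with all edges directed from the two high-degree vertices toward the `2s`
degree-2 vertices, some edge has span at least `s`. -/
theorem stmt_15 (s : ℕ) (hs : 1 ≤ s)
    (x : Fin 2 ⊕ Fin (2 * s) → ℝ) (y : Fin 2 ⊕ Fin (2 * s) → ℤ)
    (hinj : Function.Injective (fun v => (x v, (y v : ℝ))))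
    (hup : ∀ (i : Fin 2) (j : Fin (2 * s)), y (Sum.inl i) < y (Sum.inr j))
    (hcross : ∀ (i i' : Fin 2) (j j' : Fin (2 * s)), ¬(i = i' ∧ j = j') →
      ∀ p : ℝ × ℝ,
        p ∈ segment ℝ (x (Sum.inl i), (y (Sum.inl i) : ℝ)) (x (Sum.inr j), (y (Sum.inr j) : ℝ)) →
        p ∈ segment ℝ (x (Sum.inl i'), (y (Sum.inl i') : ℝ)) (x (Sum.inr j'), (y (Sum.inr j') : ℝ)) →
        (i = i' ∧ p = (x (Sum.inl i), (y (Sum.inl i) : ℝ))) ∨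
        (j = j' ∧ p = (x (Sum.inr j), (y (Sum.inr j) : ℝ)))) :
    ∃ (i : Fin 2) (j : Fin (2 * s)), (s : ℤ) ≤ y (Sum.inr j) - y (Sum.inl i) := by
  by_contra hcon
  push_neg at hcon
  -- pigeonhole: some level t has at least 3 of the top vertices
  have hmaps : ∀ j : Fin (2 * s), j ∈ (Finset.univ : Finset (Fin (2 * s))) →
      y (Sum.inr j) ∈ Finset.Icc (y (Sum.inl 0) + 1) (y (Sum.inl 0) + (s : ℤ) - 1) := by
    intro j _
    rw [Finset.mem_Icc]
    have h1 := hup 0 j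
    have h2 := hcon 0 j
    omega
  have hcard : (Finset.Icc (y (Sum.inl 0) + 1) (y (Sum.inl 0) + (s : ℤ) - 1)).card * 2
      < (Finset.univ : Finset (Fin (2 * s))).card := by
    rw [Int.card_Icc, Finset.card_univ, Fintype.card_fin]
    omega
  obtain ⟨t, _, hT⟩ := Finset.exists_lt_card_fiber_of_mul_lt_card_of_maps_to hmaps hcard
  set T := Finset.univ.filter (fun j => y (Sum.inr j) = t) with hTdef
  -- extract three distinct elements of T
  obtain ⟨a, ha⟩ := Finset.card_pos.mp (by omega : 0 < T.card)
  obtain ⟨b, hb⟩ := Finset.card_pos.mp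
    (by rw [Finset.card_erase_of_mem ha]; omega : 0 < (T.erase a).card)
  obtain ⟨c, hc⟩ := Finset.card_pos.mp
    (by rw [Finset.card_erase_of_mem hb, Finset.card_erase_of_mem ha]; omega :
      0 < ((T.erase a).erase b).card)
  obtain ⟨hcb, hc'⟩ := Finset.mem_erase.mp hc
  obtain ⟨hca, hcT⟩ := Finset.mem_erase.mp hc'
  obtain ⟨hba, hbT⟩ := Finset.mem_erase.mp hb
  have hya : y (Sum.inr a) = t := (Finset.mem_filter.mp ha).2
  have hyb : y (Sum.inr b) = t := (Finset.mem_filter.mp hbT).2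
  have hyc : y (Sum.inr c) = t := (Finset.mem_filter.mp hcT).2
  -- x-coordinates of vertices at the same level are distinct
  have hxne : ∀ j j' : Fin (2 * s), j ≠ j' → y (Sum.inr j) = t → y (Sum.inr j') = t →
      x (Sum.inr j) ≠ x (Sum.inr j') := by
    intro j j' hjj hj hj' hx
    apply hjj
    have : (Sum.inr j : Fin 2 ⊕ Fin (2 * s)) = Sum.inr j' := by
      apply hinj
      simp only [Prod.mk.injEq]
      exact ⟨hx, by rw [hj, hj']⟩
    exact Sum.inr.inj this
  -- core: middle vertex gives a crossing
  have main : ∀ a b c : Fin (2 * s), y (Sum.inr a) = t → y (Sum.inr b) = t →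
      y (Sum.inr c) = t → a ≠ b → c ≠ b →
      x (Sum.inr a) < x (Sum.inr b) → x (Sum.inr b) < x (Sum.inr c) → False := by
    intro a b c hya hyb hyc hab hcb hx1 hx2
    have hd : ∀ (i i' : Fin 2) (j j' : Fin (2 * s)), i ≠ i' → j ≠ j' →
        ∀ p : ℝ × ℝ, p ∈ segment ℝ (x (Sum.inl i), (y (Sum.inl i) : ℝ))
          (x (Sum.inr j), ((t : ℤ) : ℝ)) →
        p ∈ segment ℝ (x (Sum.inl i'), (y (Sum.inl i') : ℝ))
          (x (Sum.inr j'), ((t : ℤ) : ℝ)) → y (Sum.inr j) = t → y (Sum.inr j') = t → False := by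
      intro i i' j j' hi hj p h1 h2 e1 e2
      rw [← e1] at h1
      rw [← e2] at h2
      rcases hcross i i' j j' (fun h => hi h.1) p h1 h2 with ⟨h, _⟩ | ⟨h, _⟩
      · exact hi h
      · exact hj h
    refine coreD (x (Sum.inl 0)) (y (Sum.inl 0)) (x (Sum.inl 1)) (y (Sum.inl 1))
      (x (Sum.inr a)) (x (Sum.inr b)) (x (Sum.inr c)) ((t : ℤ) : ℝ) ?_ ?_ ?_ ?_ ?_ ?_ hx1 hx2
    · exact_mod_cast hya ▸ hup 0 a
    · exact_mod_cast hya ▸ hup 1 a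
    · exact fun p h1 h2 => hd 0 1 a b (by decide) hab p h1 h2 hya hyb
    · exact fun p h1 h2 => hd 0 1 c b (by decide) hcb p h1 h2 hyc hyb
    · exact fun p h1 h2 => hd 1 0 a b (by decide) hab p h1 h2 hya hyb
    · exact fun p h1 h2 => hd 1 0 c b (by decide) hcb p h1 h2 hyc hyb
  -- case analysis on the ordering of the three x-coordinates
  rcases (Ne.lt_or_gt (hxne a b hba.symm hya hyb)) with h1 | h1 <;>
    rcases (Ne.lt_or_gt (hxne b c hcb.symm hyb hyc)) with h2 | h2 <;>
    rcases (Ne.lt_or_gt (hxne a c hca.symm hya hyc)) with h3 | h3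
  · exact main a b c hya hyb hyc hba.symm hcb h1 h2
  · linarith
  · exact main a c b hya hyc hyb hca.symm hcb.symm h3 h2
  · exact main c a b hyc hya hyb hca hba h3 h1
  · exact main b a c hyb hya hyc hba hca h1 h3
  · exact main b c a hyb hyc hya hcb.symm hca.symm h2 h3
  · linarith
  · exact main c b a hyc hyb hya hcb hba.symm h2 h1
end
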